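/- On-shell value of the twisted superpotential for massive type IIA quivers: Let n > 0 and S > 0 be reals, κ = n/S, ρ(t) = (3^{1/6}/2)·κ^{1/3} − (2/3^{3/2})·κ·t², t_± = ±(3^{5/6}/2)·κ^{−1/3}, and v(t) = −t/√3. Then −i·[ n·∫_{t₋}^{t₊} ρ(t)·( −i t v(t) + (t² − v(t)²)/2 ) dt + (iS/(1 + i/√3))·∫_{t₋}^{t₊} ρ(t)² dt ] = (3/5)·μ, where μ = (√3/4)·(1 − i/√3)·n^{1/3}·(3S)^{2/3}. Equivalently, n·(1/3 + i/√3)·∫ t²ρ(t) dt + (iS/(1 + i/√3))·∫ ρ(t)² dt = i·(3/5)·μ. -/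

import Mathlib

open Real intervalIntegral

lemma int1 (c1 c2 a b : ℝ) :
    ∫ t in a..b, t ^ 2 * (c1 - c2 * t ^ 2)
      = c1 * (b ^ 3 - a ^ 3) / 3 - c2 * (b ^ 5 - a ^ 5) / 5 := by
  have h : ∀ x ∈ Set.uIcc a b,
      HasDerivAt (fun t : ℝ => c1 * t ^ 3 / 3 - c2 * t ^ 5 / 5)
        (x ^ 2 * (c1 - c2 * x ^ 2)) x := by
    intro x _
    have h1 := ((hasDerivAt_pow 3 x).const_mul (c1 / 3)).sub
      ((hasDerivAt_pow 5 x).const_mul (c2 / 5))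
    convert h1 using 1
    · rfl
    · rfl
    · ext t; simp only [Pi.sub_apply]; ring
    · push_cast; ring
  rw [intervalIntegral.integral_eq_sub_of_hasDerivAt h
    (by apply Continuous.intervalIntegrable; continuity)]
  ring

lemma int2 (c1 c2 a b : ℝ) :
    ∫ t in a..b, (c1 - c2 * t ^ 2) ^ 2
      = c1 ^ 2 * (b - a) - 2 * c1 * c2 * (b ^ 3 - a ^ 3) / 3
        + c2 ^ 2 * (b ^ 5 - a ^ 5) / 5 := by
  have h : ∀ x ∈ Set.uIcc a b,
      HasDerivAt (fun t : ℝ => c1 ^ 2 * t - 2 * c1 * c2 * t ^ 3 / 3 + c2 ^ 2 * t ^ 5 / 5)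
        ((c1 - c2 * x ^ 2) ^ 2) x := by
    intro x _
    have h1 := (((hasDerivAt_id x).const_mul (c1 ^ 2)).sub
      ((hasDerivAt_pow 3 x).const_mul (2 * c1 * c2 / 3))).add
      ((hasDerivAt_pow 5 x).const_mul (c2 ^ 2 / 5))
    convert h1 using 1
    · rfl
    · rfl
    · ext t; simp only [id_eq, Pi.add_apply, Pi.sub_apply]; ring
    · push_cast; ring
  rw [intervalIntegral.integral_eq_sub_of_hasDerivAt h
    (by apply Continuous.intervalIntegrable; continuity)]
  ring

lemma cube_rpow (x : ℝ) (hx : 0 ≤ x) : (x ^ 3) ^ ((1 : ℝ) / 3) = x := by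
  rw [← Real.rpow_natCast x 3, ← Real.rpow_mul hx]
  norm_num


/-- On-shell value of the twisted superpotential for massive type IIA quivers:
evaluating the twisted superpotential functional on the large-N Bethe-ansatz
solution `ρ(t)`, `v(t) = −t/√3` gives `(3/5)·μ` with
`μ = (√3/4)(1 − i/√3)n^{1/3}(3S)^{2/3}`; equivalently
`n(1/3 + i/√3)∫t²ρ dt + (iS/(1 + i/√3))∫ρ² dt = i(3/5)μ`. -/
theorem stmt14 (n S : ℝ) (hn : 0 < n) (hS : 0 < S)
    (κ : ℝ) (hκ : κ = n / S)
    (ρ : ℝ → ℝ)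
    (hρ : ∀ t, ρ t = (3 : ℝ) ^ ((1 : ℝ) / 6) / 2 * κ ^ ((1 : ℝ) / 3)
      - 2 / (3 : ℝ) ^ ((3 : ℝ) / 2) * κ * t ^ 2)
    (tp tm : ℝ)
    (htp : tp = (3 : ℝ) ^ ((5 : ℝ) / 6) / 2 * κ ^ (-(1 : ℝ) / 3))
    (htm : tm = -((3 : ℝ) ^ ((5 : ℝ) / 6) / 2 * κ ^ (-(1 : ℝ) / 3)))
    (v : ℝ → ℝ) (hv : ∀ t, v t = -t / Real.sqrt 3)
    (μ : ℂ)
    (hμ : μ = ((Real.sqrt 3 / 4 : ℝ) : ℂ) * (1 - Complex.I / (Real.sqrt 3 : ℂ))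
      * ((n ^ ((1 : ℝ) / 3) : ℝ) : ℂ) * (((3 * S) ^ ((2 : ℝ) / 3) : ℝ) : ℂ)) :
    -Complex.I * ((n : ℂ) * (∫ t in tm..tp, (ρ t : ℂ) *
          (-Complex.I * (t : ℂ) * (v t : ℂ) + ((t : ℂ) ^ 2 - (v t : ℂ) ^ 2) / 2))
        + Complex.I * (S : ℂ) / (1 + Complex.I / (Real.sqrt 3 : ℂ))
          * (∫ t in tm..tp, (ρ t : ℂ) ^ 2))
      = 3 / 5 * μ ∧
    (n : ℂ) * (1 / 3 + Complex.I / (Real.sqrt 3 : ℂ))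
        * (∫ t in tm..tp, ((t ^ 2 * ρ t : ℝ) : ℂ))
      + Complex.I * (S : ℂ) / (1 + Complex.I / (Real.sqrt 3 : ℂ))
        * (∫ t in tm..tp, (ρ t : ℂ) ^ 2)
      = Complex.I * (3 / 5) * μ := by
  have hκpos : 0 < κ := hκ ▸ div_pos hn hS
  set u : ℝ := (3 : ℝ) ^ ((1 : ℝ) / 6) with hudef
  set k : ℝ := κ ^ ((1 : ℝ) / 3) with hkdef
  set w : ℝ := S ^ ((1 : ℝ) / 3) with hwdef
  have hupos : 0 < u := Real.rpow_pos_of_pos (by norm_num) _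
  have hkpos : 0 < k := Real.rpow_pos_of_pos hκpos _
  have hwpos : 0 < w := Real.rpow_pos_of_pos hS _
  have hu6 : u ^ 6 = 3 := by
    rw [hudef, ← Real.rpow_natCast ((3:ℝ) ^ ((1:ℝ)/6)) 6, ← Real.rpow_mul (by norm_num)]
    norm_num
  have hsq : Real.sqrt 3 = u ^ 3 := by
    rw [Real.sqrt_eq_rpow, hudef, ← Real.rpow_natCast ((3:ℝ) ^ ((1:ℝ)/6)) 3,
      ← Real.rpow_mul (by norm_num)]
    norm_num
  have h56 : (3 : ℝ) ^ ((5 : ℝ) / 6) = u ^ 5 := by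
    rw [hudef, ← Real.rpow_natCast ((3:ℝ) ^ ((1:ℝ)/6)) 5, ← Real.rpow_mul (by norm_num)]
    norm_num
  have h32 : (3 : ℝ) ^ ((3 : ℝ) / 2) = u ^ 9 := by
    rw [hudef, ← Real.rpow_natCast ((3:ℝ) ^ ((1:ℝ)/6)) 9, ← Real.rpow_mul (by norm_num)]
    norm_num
  have hk3 : k ^ 3 = κ := by
    rw [hkdef, ← Real.rpow_natCast (κ ^ ((1:ℝ)/3)) 3, ← Real.rpow_mul hκpos.le]
    norm_num
  have hw3 : w ^ 3 = S := by
    rw [hwdef, ← Real.rpow_natCast (S ^ ((1:ℝ)/3)) 3, ← Real.rpow_mul hS.le]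
    norm_num
  have hkm : κ ^ (-(1 : ℝ) / 3) = k⁻¹ := by
    rw [show (-(1:ℝ)/3) = -((1:ℝ)/3) by norm_num, Real.rpow_neg hκpos.le, hkdef]
  have hnkw : n = k ^ 3 * w ^ 3 := by
    rw [hk3, hw3, hκ]; field_simp
  have hn13 : n ^ ((1 : ℝ) / 3) = k * w := by
    rw [hnkw, ← mul_pow, cube_rpow _ (by positivity)]
  have h3S : (3 * S) ^ ((2 : ℝ) / 3) = u ^ 4 * w ^ 2 := by
    have : 3 * S = (u ^ 2 * w) ^ 3 := by
      rw [mul_pow, ← hw3, ← hu6]; ring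
    rw [this, ← Real.rpow_natCast (u ^ 2 * w) 3, ← Real.rpow_mul (by positivity)]
    rw [show ((3:ℕ):ℝ) * ((2:ℝ)/3) = ((2:ℕ):ℝ) by norm_num, Real.rpow_natCast]
    ring
  have hρ' : ∀ t, ρ t = u / 2 * k - 2 / u ^ 9 * k ^ 3 * t ^ 2 := by
    intro t; rw [hρ t, h32, hk3]
  have htp' : tp = u ^ 5 / 2 * k⁻¹ := by rw [htp, h56, hkm]
  have htm' : tm = -(u ^ 5 / 2 * k⁻¹) := by rw [htm, h56, hkm]
  have hR1 : (∫ t in tm..tp, t ^ 2 * ρ t) = u ^ 16 / (60 * k ^ 2) := by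
    simp only [hρ']
    rw [int1, htp', htm']
    field_simp
    ring
  have hR2 : (∫ t in tm..tp, (ρ t) ^ 2) = 2 * u ^ 7 * k / 15 := by
    simp only [hρ']
    rw [int2, htp', htm']
    field_simp
    ring
  have huC : ((u : ℝ) : ℂ) ^ 6 = 3 := by exact_mod_cast hu6
  have huC0 : ((u : ℝ) : ℂ) ≠ 0 := by exact_mod_cast hupos.ne'
  have hkC0 : ((k : ℝ) : ℂ) ≠ 0 := by exact_mod_cast hkpos.ne'
  have hwC0 : ((w : ℝ) : ℂ) ≠ 0 := by exact_mod_cast hwpos.ne'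
  have hD2 : ((u : ℝ) : ℂ) ^ 3 + Complex.I ≠ 0 := by
    intro h
    have h2 := congrArg Complex.im h
    simp [← Complex.ofReal_pow] at h2
  have hD : (1 : ℂ) + Complex.I / ((u : ℝ) : ℂ) ^ 3 ≠ 0 := by
    intro h
    have h2 := congrArg Complex.im h
    simp [Complex.div_im, Complex.add_im] at h2
    rcases h2 with h2 | h2
    · rw [← Complex.ofReal_pow, Complex.ofReal_re] at h2
      exact absurd h2 (by positivity)
    · exact absurd h2 hupos.ne'
  have hinv : ∀ z : ℂ, z / (1 + Complex.I / ((u:ℝ):ℂ) ^ 3)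
      = z * (((u:ℝ):ℂ) ^ 3 * (((u:ℝ):ℂ) ^ 3 - Complex.I)) / 4 := by
    intro z
    rw [div_eq_iff hD]
    field_simp
    linear_combination (-z) * huC + (z) * Complex.I_sq
  have hJ2 : (∫ t in tm..tp, ((ρ t : ℝ) : ℂ) ^ 2) = (((2 * u ^ 7 * k / 15 : ℝ)) : ℂ) := by
    simp only [← Complex.ofReal_pow, intervalIntegral.integral_ofReal, hR2]
  have hJ1 : (∫ t in tm..tp, ((t ^ 2 * ρ t : ℝ) : ℂ)) = ((u ^ 16 / (60 * k ^ 2) : ℝ) : ℂ) := by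
    rw [intervalIntegral.integral_ofReal, hR1]
  have key : (n : ℂ) * (1 / 3 + Complex.I / (Real.sqrt 3 : ℂ))
        * (∫ t in tm..tp, ((t ^ 2 * ρ t : ℝ) : ℂ))
      + Complex.I * (S : ℂ) / (1 + Complex.I / (Real.sqrt 3 : ℂ))
        * (∫ t in tm..tp, ((ρ t : ℝ) : ℂ) ^ 2)
      = Complex.I * (3 / 5) * (((Real.sqrt 3 / 4 : ℝ) : ℂ)
          * (1 - Complex.I / (Real.sqrt 3 : ℂ))
          * ((n ^ ((1 : ℝ) / 3) : ℝ) : ℂ) * (((3 * S) ^ ((2 : ℝ) / 3) : ℝ) : ℂ)) := by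
    rw [hJ1, hJ2, hsq, hn13, h3S, hnkw, ← hw3]
    push_cast
    rw [hinv]
    field_simp [huC0, hkC0]
    linear_combination (((k:ℂ))^3*((w:ℂ))^3*(-7200*((u:ℝ):ℂ)^10*Complex.I^2
        + 10800*((u:ℝ):ℂ)^13*Complex.I + 1200*((u:ℝ):ℂ)^16 + 3600*((u:ℝ):ℂ)^10)) * huC
      + (10800*((k:ℂ))^3*((w:ℂ))^3*((u:ℝ):ℂ)^10) * Complex.I_sq
      + (2700*((u:ℝ):ℂ)^3*Complex.I - 1800*Complex.I^2 + 300*(((u:ℝ):ℂ)^6+3)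
        + ((k:ℂ))^3*((w:ℂ))^3*(-32400*Complex.I^2*((u:ℝ):ℂ)^4
          + 32400*Complex.I*(((u:ℝ):ℂ)^7+3*((u:ℝ):ℂ))
          + 7200*Complex.I^2*(((u:ℝ):ℂ)^10+3*((u:ℝ):ℂ)^4)
          - 10800*Complex.I*(((u:ℝ):ℂ)^13+3*((u:ℝ):ℂ)^7+9*((u:ℝ):ℂ))
          - 1200*(((u:ℝ):ℂ)^16+3*((u:ℝ):ℂ)^10+9*((u:ℝ):ℂ)^4))) * huC
      + (2700 - 32400*((k:ℂ))^3*((w:ℂ))^3*((u:ℝ):ℂ)^4) * Complex.I_sq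
  have hpt : (∫ t in tm..tp, (ρ t : ℂ) *
        (-Complex.I * (t : ℂ) * (v t : ℂ) + ((t : ℂ) ^ 2 - (v t : ℂ) ^ 2) / 2))
      = (1 / 3 + Complex.I / (Real.sqrt 3 : ℂ))
        * ∫ t in tm..tp, ((t ^ 2 * ρ t : ℝ) : ℂ) := by
    rw [← intervalIntegral.integral_const_mul]
    apply intervalIntegral.integral_congr
    intro t _
    simp only [hv, hsq]
    push_cast
    field_simp
    linear_combination (((ρ t : ℝ):ℂ)*((t:ℝ):ℂ)^2) * huC
  have key2 : (n : ℂ) * (1 / 3 + Complex.I / (Real.sqrt 3 : ℂ))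
        * (∫ t in tm..tp, ((t ^ 2 * ρ t : ℝ) : ℂ))
      + Complex.I * (S : ℂ) / (1 + Complex.I / (Real.sqrt 3 : ℂ))
        * (∫ t in tm..tp, ((ρ t : ℝ) : ℂ) ^ 2)
      = Complex.I * (3 / 5) * μ := by
    rw [hμ]; exact key
  refine ⟨?_, key2⟩
  rw [hpt]
  linear_combination (-Complex.I) * key2 + (-(3/5)*μ) * Complex.I_sq
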